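/- Let s ≥ 1 and let m₁ > 0, n₁ > 0, M, N, n₂, m₂ be real with 0 < N < 1, 1 < n₂ < m₂, M > N + s, and m₂ > ((n₁/(2m₁))(1+√5))^{1/(M−N−s)}. Define a*(x) = (−1 + √(1 + 4(x+1)^s)) / (2(x+1)^s). Then for all x ≥ 0, a*(x) > n₁(x + n₂)^N / (m₁(x + m₂)^M). -/

import Mathlib

/-- Lemma 4.2 of the paper: the positive root `a*(x)` of `−(x+1)^s a² − a + 1 = 0`
stays above the `a`-intercept `n(x)/m(x)` of the moving boundary line. -/
theorem root_above_intercept_poly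
    (s m₁ m₂ n₁ n₂ M N : ℝ)
    (hs : 1 ≤ s)
    (hm₁ : 0 < m₁) (hn₁ : 0 < n₁)
    (hN0 : 0 < N) (hN1 : N < 1)
    (hn₂ : 1 < n₂) (hn₂m₂ : n₂ < m₂)
    (hM : M > N + s)
    (hm₂ : m₂ > (n₁ / (2 * m₁) * (1 + Real.sqrt 5)) ^ (1 / (M - N - s))) :
    ∀ x : ℝ, 0 ≤ x →
      (-1 + Real.sqrt (1 + 4 * (x + 1) ^ s)) / (2 * (x + 1) ^ s)
        > n₁ * (x + n₂) ^ N / (m₁ * (x + m₂) ^ M) := by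
  intro x hx
  have hx1 : (1:ℝ) ≤ x + 1 := by linarith
  have hxm : (0:ℝ) < x + m₂ := by linarith
  have hxn : (0:ℝ) < x + n₂ := by linarith
  have hp1 : (1:ℝ) ≤ (x + 1) ^ s := Real.one_le_rpow hx1 (by linarith)
  have hp0 : (0:ℝ) < (x + 1) ^ s := by linarith
  have he : 0 < M - N - s := by linarith
  have h5m : Real.sqrt 5 * Real.sqrt 5 = 5 := Real.mul_self_sqrt (by norm_num)
  have h5 : (1:ℝ) < Real.sqrt 5 := by nlinarith [Real.sqrt_nonneg 5]
  set C := n₁ / (2 * m₁) * (1 + Real.sqrt 5) with hCdef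
  have hC0 : 0 < C := by
    apply mul_pos (by positivity) (by positivity)
  -- key inequality from the hypothesis on m₂
  have hkey : C < (x + m₂) ^ (M - N - s) := by
    have h2 : (C ^ (1 / (M - N - s))) ^ (M - N - s) < (x + m₂) ^ (M - N - s) :=
      Real.rpow_lt_rpow (Real.rpow_nonneg hC0.le _) (by linarith) he
    rwa [← Real.rpow_mul hC0.le, one_div_mul_cancel he.ne', Real.rpow_one] at h2
  have hpos : (0:ℝ) < (Real.sqrt 5 - 1) * m₁ := by nlinarith
  have hE := mul_lt_mul_of_pos_left hkey hpos
  have hCeq : (Real.sqrt 5 - 1) * m₁ * C = 2 * n₁ := by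
    rw [hCdef]; field_simp; linear_combination h5m
  have hfin : 2 * n₁ < (Real.sqrt 5 - 1) * m₁ * (x + m₂) ^ (M - N - s) := by
    linarith [hE, hCeq]
  have hM' : (x + m₂) ^ M
      = (x + m₂) ^ N * (x + m₂) ^ s * (x + m₂) ^ (M - N - s) := by
    rw [← Real.rpow_add hxm, ← Real.rpow_add hxm]; ring_nf
  have hN' : (x + n₂) ^ N ≤ (x + m₂) ^ N :=
    Real.rpow_le_rpow hxn.le (by linarith) hN0.le
  have hs' : (x + 1) ^ s ≤ (x + m₂) ^ s :=
    Real.rpow_le_rpow (by linarith) (by linarith) (by linarith)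
  have hP : (0:ℝ) < (x + m₂) ^ N * (x + m₂) ^ s := by positivity
  have hstep2 : n₁ * (x + n₂) ^ N / (m₁ * (x + m₂) ^ M)
      < (Real.sqrt 5 - 1) / (2 * (x + 1) ^ s) := by
    rw [div_lt_div_iff₀ (by positivity) (by positivity)]
    calc n₁ * (x + n₂) ^ N * (2 * (x + 1) ^ s)
        = 2 * n₁ * ((x + n₂) ^ N * (x + 1) ^ s) := by ring
      _ ≤ 2 * n₁ * ((x + m₂) ^ N * (x + m₂) ^ s) := by
          apply mul_le_mul_of_nonneg_left _ (by positivity)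
          exact mul_le_mul hN' hs' hp0.le (by positivity)
      _ < (Real.sqrt 5 - 1) * (m₁ * (x + m₂) ^ M) := by
          rw [hM']
          nlinarith [mul_lt_mul_of_pos_right hfin hP]
  have hsqrt5 : Real.sqrt 5 ≤ Real.sqrt (1 + 4 * (x + 1) ^ s) :=
    Real.sqrt_le_sqrt (by linarith)
  have hstep1 : (Real.sqrt 5 - 1) / (2 * (x + 1) ^ s)
      ≤ (-1 + Real.sqrt (1 + 4 * (x + 1) ^ s)) / (2 * (x + 1) ^ s) :=
    (div_le_div_iff_of_pos_right (by positivity)).mpr (by linarith)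
  exact lt_of_lt_of_le hstep2 hstep1
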